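/- Let N be a binomial random variable with parameters n ≥ 1 and 0 < q ≤ 1/2. Then P(N ≥ nq) ≥ min(q, 1/4). -/

import Mathlib

open Finset

/-! Auxiliary machinery for the theorem `binomial_exceeds_mean`. -/

private lemma binom_sum (n : ℕ) (x : ℝ) :
    ∑ j ∈ range (n+1), (n.choose j : ℝ) * x^j * (1-x)^(n-j) = 1 := by
  have h := add_pow x (1-x) n
  simp only [add_sub_cancel, one_pow] at h
  rw [show ∑ j ∈ range (n+1), (n.choose j : ℝ) * x^j * (1-x)^(n-j)
      = ∑ j ∈ range (n+1), x^j * (1-x)^(n-j) * (n.choose j : ℝ) from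
    Finset.sum_congr rfl (fun j _ => by ring)]
  exact h.symm

private lemma tail_hasDeriv (n k : ℕ) (hk : 1 ≤ k) (hkn : k ≤ n + 1) (x : ℝ) :
    HasDerivAt (fun x : ℝ => ∑ j ∈ Ico k (n+1), (n.choose j : ℝ) * x^j * (1-x)^(n-j))
      ((↑(k * n.choose k) : ℝ) * x^(k-1) * (1-x)^(n-k)) x := by
  set u : ℕ → ℝ := fun j => (↑(j * n.choose j) : ℝ) * x^(j-1) * (1-x)^(n-j) with hu
  have hterm : ∀ j ∈ Ico k (n+1),
      HasDerivAt (fun x : ℝ => (n.choose j : ℝ) * x^j * (1-x)^(n-j)) (u j - u (j+1)) x := by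
    intro j hj
    simp only [mem_Ico] at hj
    have h1 : HasDerivAt (fun x : ℝ => (n.choose j : ℝ) * x^j)
        ((n.choose j : ℝ) * ((j : ℝ) * x^(j-1))) x := (hasDerivAt_pow j x).const_mul _
    have h2 : HasDerivAt (fun x : ℝ => (1-x)^(n-j))
        ((↑(n-j) : ℝ) * (1-x)^(n-j-1) * (-1)) x := by
      have := (hasDerivAt_pow (n-j) (1-x)).comp x ((hasDerivAt_id x).const_sub 1)
      simpa [Function.comp_def] using this
    have h3 := h1.mul h2
    have hval : u j - u (j+1)
        = (n.choose j : ℝ) * ((j:ℝ) * x^(j-1)) * (1-x)^(n-j)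
          + ((n.choose j : ℝ) * x^j) * ((↑(n-j):ℝ) * (1-x)^(n-j-1) * (-1)) := by
      rw [hu]
      simp only []
      rw [show n-(j+1) = n-j-1 from by omega, show (j+1)-1 = j from by omega,
        show (j+1) * n.choose (j+1) = n.choose j * (n-j) from by
          rw [mul_comm]; exact Nat.choose_succ_right_eq n j]
      push_cast
      ring
    rw [hval]
    exact h3
  have h := HasDerivAt.fun_sum hterm
  have hsum : ∑ j ∈ Ico k (n+1), (u j - u (j+1)) = (↑(k * n.choose k) : ℝ) * x^(k-1) * (1-x)^(n-k) := by
    rw [Finset.sum_Ico_eq_sum_range]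
    rw [show (∑ i ∈ range (n+1-k), (u (k+i) - u (k+i+1)))
        = ∑ i ∈ range (n+1-k), (u (k+i) - u (k+(i+1))) from
      Finset.sum_congr rfl (fun i _ => by rw [add_assoc])]
    rw [Finset.sum_range_sub' (fun i => u (k+i)) (n+1-k)]
    rw [show k + (n+1-k) = n+1 from by omega]
    have hz : u (n+1) = 0 := by
      rw [hu]; simp [Nat.choose_succ_self]
    rw [hz, sub_zero]
    norm_num [hu]
  rw [← hsum]
  exact h

private lemma tail_mono (n k : ℕ) (hk : 1 ≤ k) (hkn : k ≤ n + 1) :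
    MonotoneOn (fun x : ℝ => ∑ j ∈ Ico k (n+1), (n.choose j : ℝ) * x^j * (1-x)^(n-j))
      (Set.Icc 0 1) := by
  apply monotoneOn_of_deriv_nonneg (convex_Icc 0 1)
  · exact Continuous.continuousOn (by
      apply continuous_finset_sum
      intro j _
      continuity)
  · intro x _
    exact (tail_hasDeriv n k hk hkn x).differentiableAt.differentiableWithinAt
  · intro x hx
    rw [interior_Icc] at hx
    rw [(tail_hasDeriv n k hk hkn x).deriv]
    have h1 : (0:ℝ) ≤ x := le_of_lt hx.1
    have h2 : (0:ℝ) ≤ 1 - x := by linarith [hx.2]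
    positivity

private lemma scalar_ineq (A B i : ℕ) (hA : i + 2 ≤ A) (hAB : A ≤ B) :
    (A-1-i) * (A+1+i) * B^2 ≤ (B-i) * (B+2+i) * A^2 := by
  zify [show i ≤ A-1 from by omega, show 1 ≤ A from by omega, show i ≤ B from by omega]
  have hBA : (0:ℤ) ≤ (B:ℤ) - A := by
    have : (A:ℤ) ≤ (B:ℤ) := by exact_mod_cast hAB
    linarith
  have t1 : (0:ℤ) ≤ ((i:ℤ)+1)^2 * (((B:ℤ)-A)*((B:ℤ)+A)) := by positivity
  have t2 : (0:ℤ) ≤ (A:ℤ)^2*(2*B+1) := by positivity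
  nlinarith [t1, t2]

private lemma pair_nat (n m : ℕ) (hm : 1 ≤ m) (hnm : 2*m ≤ n) :
    ∀ i, i ≤ m - 1 → n.choose (m-1-i) * (n-m)^(2*i+1) ≤ n.choose (m+i) * m^(2*i+1) := by
  intro i
  induction i with
  | zero =>
    intro _
    have hid := Nat.choose_succ_right_eq n (m-1)
    rw [show m-1+1 = m from by omega] at hid
    calc n.choose (m-1-0) * (n-m)^(2*0+1) = n.choose (m-1) * (n-m) := by norm_num
      _ ≤ n.choose (m-1) * (n-(m-1)) := Nat.mul_le_mul_left _ (by omega)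
      _ = n.choose m * m := hid.symm
      _ = n.choose (m+0) * m^(2*0+1) := by norm_num
  | succ i ih =>
    intro hi1
    have IH := ih (by omega)
    have hi2 : i + 2 ≤ m := by omega
    have h1 := Nat.choose_succ_right_eq n (m-2-i)
    rw [show m-2-i+1 = m-1-i from by omega] at h1
    have h2 := Nat.choose_succ_right_eq n (m+i)
    have hcancel : 0 < (m+i+1) * (n-(m-2-i)) := by
      have : 0 < n - (m-2-i) := by omega
      positivity
    apply Nat.le_of_mul_le_mul_right _ hcancel
    have e1 : n.choose (m-1-(i+1)) * (n-m)^(2*(i+1)+1) * ((m+i+1) * (n-(m-2-i)))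
        = (n.choose (m-1-i) * (n-m)^(2*i+1)) * ((m-1-i)*(m+1+i)*(n-m)^2) := by
      rw [show m-1-(i+1) = m-2-i from by omega,
        show 2*(i+1)+1 = (2*i+1)+2 from by omega, pow_add]
      calc n.choose (m-2-i) * ((n-m)^(2*i+1) * (n-m)^2) * ((m+i+1) * (n-(m-2-i)))
          = (n.choose (m-2-i) * (n-(m-2-i))) * ((n-m)^(2*i+1) * (n-m)^2 * (m+i+1)) := by ring
        _ = (n.choose (m-1-i) * (m-1-i)) * ((n-m)^(2*i+1) * (n-m)^2 * (m+i+1)) := by rw [← h1]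
        _ = (n.choose (m-1-i) * (n-m)^(2*i+1)) * ((m-1-i)*(m+1+i)*(n-m)^2) := by ring
    have e2 : n.choose (m+(i+1)) * m^(2*(i+1)+1) * ((m+i+1) * (n-(m-2-i)))
        = (n.choose (m+i) * m^(2*i+1)) * (((n-m)-i)*((n-m)+2+i)*m^2) := by
      rw [show m+(i+1) = m+i+1 from by omega,
        show 2*(i+1)+1 = (2*i+1)+2 from by omega, pow_add]
      calc n.choose (m+i+1) * (m^(2*i+1) * m^2) * ((m+i+1) * (n-(m-2-i)))
          = (n.choose (m+i+1) * (m+i+1)) * (m^(2*i+1) * m^2 * (n-(m-2-i))) := by ring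
        _ = (n.choose (m+i) * (n-(m+i))) * (m^(2*i+1) * m^2 * (n-(m-2-i))) := by rw [h2]
        _ = (n.choose (m+i) * m^(2*i+1)) * (((n-m)-i)*((n-m)+2+i)*m^2) := by
            rw [show n-(m+i) = (n-m)-i from by omega, show n-(m-2-i) = (n-m)+2+i from by omega]
            ring
    rw [e1, e2]
    calc (n.choose (m-1-i) * (n-m)^(2*i+1)) * ((m-1-i)*(m+1+i)*(n-m)^2)
        ≤ (n.choose (m+i) * m^(2*i+1)) * ((m-1-i)*(m+1+i)*(n-m)^2) :=
          Nat.mul_le_mul_right _ IH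
      _ ≤ (n.choose (m+i) * m^(2*i+1)) * (((n-m)-i)*((n-m)+2+i)*m^2) :=
          Nat.mul_le_mul_left _ (scalar_ineq m (n-m) i hi2 (by omega))

private def Nn (n m j : ℕ) : ℕ := n.choose j * m^j * (n-m)^(n-j)

private lemma Nn_pair (n m i : ℕ) (hm : 1 ≤ m) (hnm : 2*m ≤ n) (hi : i ≤ m-1) :
    Nn n m (m-1-i) ≤ Nn n m (m+i) := by
  have h := pair_nat n m hm hnm i hi
  have e1 : (n-m)^(n-(m-1-i)) = (n-m)^(2*i+1) * (n-m)^(n-m-i) := by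
    rw [← pow_add]; congr 1; omega
  have e2 : m^(m+i) = m^(2*i+1) * m^(m-1-i) := by
    rw [← pow_add]; congr 1; omega
  calc Nn n m (m-1-i) = n.choose (m-1-i) * m^(m-1-i) * ((n-m)^(2*i+1) * (n-m)^(n-m-i)) := by
        rw [Nn, ← e1]
    _ = (n.choose (m-1-i) * (n-m)^(2*i+1)) * (m^(m-1-i) * (n-m)^(n-m-i)) := by ring
    _ ≤ (n.choose (m+i) * m^(2*i+1)) * (m^(m-1-i) * (n-m)^(n-m-i)) :=
        Nat.mul_le_mul_right _ h
    _ = n.choose (m+i) * (m^(2*i+1) * m^(m-1-i)) * (n-m)^(n-m-i) := by ring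
    _ = Nn n m (m+i) := by
        rw [Nn, ← e2, show n-m-i = n-(m+i) from by omega]

private lemma Bcast (n m j : ℕ) (hn : 1 ≤ n) (hm : m ≤ n) (hj : j ≤ n) :
    (n.choose j : ℝ) * ((m:ℝ)/n)^j * (1-(m:ℝ)/n)^(n-j) = (Nn n m j : ℝ)/(n:ℝ)^n := by
  have hn0 : ((n:ℝ)) ≠ 0 := by positivity
  have h1 : (1 - (m:ℝ)/n) = ((n-m : ℕ) : ℝ)/n := by
    rw [Nat.cast_sub hm]; field_simp
  rw [h1, div_pow, div_pow, Nn]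
  push_cast
  rw [show (n:ℝ)^n = (n:ℝ)^j * (n:ℝ)^(n-j) from by rw [← pow_add]; congr 1; omega]
  field_simp

private lemma half_le_tail (n m : ℕ) (hm : 1 ≤ m) (hnm : 2*m+1 ≤ n) :
    1 ≤ 2 * ((n.choose m : ℝ) * ((m:ℝ)/n)^m * (1-(m:ℝ)/n)^(n-m))
      + 2 * ∑ j ∈ Ico (m+1) (n+1), (n.choose j : ℝ) * ((m:ℝ)/n)^j * (1-(m:ℝ)/n)^(n-j) := by
  have hn : 1 ≤ n := by omega
  have hmn : m ≤ n := by omega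
  set B : ℕ → ℝ := fun j => (n.choose j : ℝ) * ((m:ℝ)/n)^j * (1-(m:ℝ)/n)^(n-j) with hB
  have hp0 : (0:ℝ) ≤ (m:ℝ)/n := by positivity
  have hp1 : (0:ℝ) ≤ 1 - (m:ℝ)/n := by
    rw [sub_nonneg, div_le_one (by positivity)]
    exact_mod_cast hmn
  have hBnn : ∀ j, 0 ≤ B j := fun j => by
    rw [hB]; positivity
  have htot : ∑ j ∈ range (n+1), B j = 1 := binom_sum n _
  have hsplit : ∑ j ∈ range m, B j + ∑ j ∈ Ico m (n+1), B j = ∑ j ∈ range (n+1), B j :=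
    Finset.sum_range_add_sum_Ico B (by omega)
  have hbot : ∑ j ∈ Ico m (n+1), B j = B m + ∑ j ∈ Ico (m+1) (n+1), B j :=
    Finset.sum_eq_sum_Ico_succ_bot (by omega) B
  have hhead : ∑ j ∈ range m, B j ≤ ∑ j ∈ Ico m (n+1), B j := by
    have s1 : ∑ j ∈ range m, B j ≤ ∑ j ∈ range m, B (2*m-1-j) := by
      apply Finset.sum_le_sum
      intro j hj
      simp only [mem_range] at hj
      have h1 : B j = (Nn n m j : ℝ)/(n:ℝ)^n := Bcast n m j hn hmn (by omega)
      have h2 : B (2*m-1-j) = (Nn n m (2*m-1-j) : ℝ)/(n:ℝ)^n := Bcast n m _ hn hmn (by omega)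
      rw [h1, h2]
      apply div_le_div_of_nonneg_right ?_ (by positivity)
      have h3 := Nn_pair n m (m-1-j) hm (by omega) (by omega)
      rw [show m-1-(m-1-j) = j from by omega, show m+(m-1-j) = 2*m-1-j from by omega] at h3
      exact_mod_cast h3
    have s2 : ∑ j ∈ range m, B (2*m-1-j) = ∑ j ∈ range m, B (m+j) := by
      rw [show (∑ j ∈ range m, B (2*m-1-j)) = ∑ j ∈ range m, B (m+(m-1-j)) from
        Finset.sum_congr rfl (fun j hj => by
          simp only [mem_range] at hj; congr 1; omega)]
      exact Finset.sum_range_reflect (fun i => B (m+i)) m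
    have s3 : ∑ j ∈ range m, B (m+j) = ∑ j ∈ Ico m (m+m), B j := by
      rw [Finset.sum_Ico_eq_sum_range]
      simp
    have s4 : ∑ j ∈ Ico m (m+m), B j ≤ ∑ j ∈ Ico m (n+1), B j := by
      apply Finset.sum_le_sum_of_subset_of_nonneg
      · apply Finset.Ico_subset_Ico le_rfl; omega
      · intro j _ _; exact hBnn j
    calc ∑ j ∈ range m, B j ≤ ∑ j ∈ range m, B (2*m-1-j) := s1
      _ = ∑ j ∈ range m, B (m+j) := s2
      _ = ∑ j ∈ Ico m (m+m), B j := s3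
      _ ≤ ∑ j ∈ Ico m (n+1), B j := s4
  have target : 1 ≤ 2 * B m + 2 * ∑ j ∈ Ico (m+1) (n+1), B j := by linarith
  exact target

private lemma step1 (b : ℕ) (hb : 1 ≤ b) : (b+1)^(2*b+1) ≤ b^b * (b+2)^(b+1) := by
  have hb1 : (0:ℝ) < (b:ℝ)+1 := by positivity
  have hbd : -(2:ℝ) ≤ -(1/((b:ℝ)+1)^2) := by
    have h1 : 1/((b:ℝ)+1)^2 ≤ 1 := by
      rw [div_le_one (by positivity)]; nlinarith
    linarith
  have hbern := one_add_mul_le_pow hbd (b+1)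
  have e1 : (1 : ℝ) + (b+1 : ℕ) * (-(1/((b:ℝ)+1)^2)) = (b:ℝ)/((b:ℝ)+1) := by
    push_cast; field_simp; ring
  have e2 : (1 : ℝ) + -(1/((b:ℝ)+1)^2) = ((b:ℝ)*((b:ℝ)+2))/((b:ℝ)+1)^2 := by
    field_simp; ring
  rw [e1, e2, div_pow] at hbern
  rw [div_le_div_iff₀ hb1 (by positivity)] at hbern
  have l1 : ((b:ℝ)*((b:ℝ)+2))^(b+1) = (b:ℝ)^b * (b:ℝ) * ((b:ℝ)+2)^(b+1) := by
    rw [mul_pow, pow_succ]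
  have l2 : (((b:ℝ)+1)^2)^(b+1) = ((b:ℝ)+1)^(2*b+1) * ((b:ℝ)+1) := by
    rw [← pow_mul, show 2*(b+1) = (2*b+1)+1 from by omega, pow_succ]
  rw [l1, l2] at hbern
  have key : ((b:ℝ)+1)^(2*b+1) * ((b:ℝ)*((b:ℝ)+1)) ≤ (b:ℝ)^b * ((b:ℝ)+2)^(b+1) * ((b:ℝ)*((b:ℝ)+1)) := by
    linear_combination hbern
  have hpos : (0:ℝ) < (b:ℝ)*((b:ℝ)+1) := by
    have : (0:ℝ) < (b:ℝ) := by exact_mod_cast hb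
    positivity
  have := le_of_mul_le_mul_right key hpos
  exact_mod_cast this

private lemma c_mono (a b : ℕ) (ha : 1 ≤ a) (hab : a ≤ b) :
    (a+1)^a * b^b ≤ a^a * (b+1)^b := by
  induction b, hab using Nat.le_induction with
  | base => rw [mul_comm]
  | succ b hab IH =>
    have hb : 1 ≤ b := le_trans ha hab
    have key : (a+1)^a * (b+1)^(b+1) * b^b ≤ a^a * (b+2)^(b+1) * b^b := by
      calc (a+1)^a * (b+1)^(b+1) * b^b
          = ((a+1)^a * b^b) * (b+1)^(b+1) := by ring
        _ ≤ (a^a * (b+1)^b) * (b+1)^(b+1) := Nat.mul_le_mul_right _ IH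
        _ = a^a * (b+1)^(2*b+1) := by
            rw [mul_assoc, ← pow_add]; congr 2; omega
        _ ≤ a^a * (b^b * (b+2)^(b+1)) := Nat.mul_le_mul_left _ (step1 b hb)
        _ = a^a * (b+2)^(b+1) * b^b := by ring
    exact Nat.le_of_mul_le_mul_right key (Nat.pow_pos (by omega))

private lemma choose_pred_mul (n m : ℕ) (hm : m ≤ n) :
    (n+1).choose m * (n+1-m) = (n+1) * n.choose m := by
  have h := Nat.add_one_mul_choose_eq n (n-m)
  rw [Nat.choose_symm hm] at h
  have h2 : (n+1).choose (n-m+1) = (n+1).choose m := by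
    have h3 := Nat.choose_symm (show n-m+1 ≤ n+1 from by omega) (n := n+1)
    rw [show n+1-(n-m+1) = m from by omega] at h3
    exact h3.symm
  rw [h2] at h
  rw [show n+1-m = n-m+1 from by omega]
  omega

private lemma mode_step_nat (n m : ℕ) (hm : 1 ≤ m) (hmn : m < n) :
    (n+1).choose m * (n+1-m)^(n+1-m) * n^n ≤ n.choose m * (n-m)^(n-m) * (n+1)^(n+1) := by
  have hc := c_mono (n-m) n (by omega) (by omega)
  calc (n+1).choose m * (n+1-m)^(n+1-m) * n^n
      = ((n+1).choose m * (n+1-m)) * ((n-m+1)^(n-m) * n^n) := by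
        rw [show n+1-m = n-m+1 from by omega, pow_succ]; ring
    _ = (n+1) * n.choose m * ((n-m+1)^(n-m) * n^n) := by rw [choose_pred_mul n m (by omega)]
    _ ≤ (n+1) * n.choose m * ((n-m)^(n-m) * (n+1)^n) := Nat.mul_le_mul_left _ hc
    _ = n.choose m * (n-m)^(n-m) * (n+1)^(n+1) := by rw [pow_succ]; ring

private lemma mode_anti (m n₀ n : ℕ) (hm : 1 ≤ m) (hn₀ : m < n₀) (hn : n₀ ≤ n) :
    (Nn n m m : ℝ)/(n:ℝ)^n ≤ (Nn n₀ m m : ℝ)/(n₀:ℝ)^n₀ := by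
  induction n, hn using Nat.le_induction with
  | base => exact le_rfl
  | succ n hn IH =>
    refine le_trans ?_ IH
    have hmn : m < n := by omega
    have hnat : Nn (n+1) m m * n^n ≤ Nn n m m * (n+1)^(n+1) := by
      calc Nn (n+1) m m * n^n
          = m^m * ((n+1).choose m * (n+1-m)^(n+1-m) * n^n) := by
            rw [Nn]; ring
        _ ≤ m^m * (n.choose m * (n-m)^(n-m) * (n+1)^(n+1)) :=
            Nat.mul_le_mul_left _ (mode_step_nat n m hm hmn)
        _ = Nn n m m * (n+1)^(n+1) := by rw [Nn]; ring
    have hn0 : (0:ℝ) < (n:ℝ) := by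
      have : 0 < n := by omega
      exact_mod_cast this
    rw [div_le_div_iff₀ (by push_cast; positivity) (pow_pos hn0 _)]
    push_cast
    exact_mod_cast hnat

private lemma cb_sq (m : ℕ) : (Nat.centralBinom m)^2 * (3*m+1) ≤ 16^m := by
  induction m with
  | zero => simp [Nat.centralBinom]
  | succ m IH =>
    have hrec := Nat.succ_mul_centralBinom_succ m
    have key : (Nat.centralBinom (m+1))^2 * (3*(m+1)+1) * ((m+1)^2 * (3*m+1))
        ≤ 16^(m+1) * ((m+1)^2 * (3*m+1)) := by
      have e1 : (Nat.centralBinom (m+1))^2 * (3*(m+1)+1) * ((m+1)^2 * (3*m+1))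
          = ((m+1) * Nat.centralBinom (m+1))^2 * ((3*m+4) * (3*m+1)) := by ring
      have e2 : ((m+1) * Nat.centralBinom (m+1))^2 * ((3*m+4) * (3*m+1))
          = (4*(2*m+1)^2*(3*m+4)) * ((Nat.centralBinom m)^2 * (3*m+1)) := by
        rw [hrec]; ring
      rw [e1, e2]
      calc (4*(2*m+1)^2*(3*m+4)) * ((Nat.centralBinom m)^2 * (3*m+1))
          ≤ (4*(2*m+1)^2*(3*m+4)) * 16^m := Nat.mul_le_mul_left _ IH
        _ ≤ (16*(m+1)^2*(3*m+1)) * 16^m := Nat.mul_le_mul_right _ (by nlinarith)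
        _ = 16^(m+1) * ((m+1)^2 * (3*m+1)) := by rw [pow_succ]; ring
    exact Nat.le_of_mul_le_mul_right key (by positivity)

private lemma mode_small_nat (m : ℕ) (hm : 5 ≤ m) :
    4 * Nn (2*m+1) m m ≤ (2*m+1)^(2*m+1) := by
  have hNn : Nn (2*m+1) m m = (2*m+1).choose m * m^m * (m+1)^(m+1) := by
    rw [Nn, show 2*m+1-m = m+1 from by omega]
  have hid : (2*m+1).choose m * (m+1) = (2*m+1) * Nat.centralBinom m := by
    have h := Nat.add_one_mul_choose_eq (2*m) m
    have h2 : (2*m+1).choose (m+1) = (2*m+1).choose m := by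
      have h3 := Nat.choose_symm (show m+1 ≤ 2*m+1 from by omega) (n := 2*m+1)
      rw [show 2*m+1-(m+1) = m from by omega] at h3
      exact h3.symm
    rw [h2] at h
    rw [Nat.centralBinom]
    omega
  have hsq : (4 * Nn (2*m+1) m m)^2 ≤ ((2*m+1)^(2*m+1))^2 := by
    have e1 : (4 * Nn (2*m+1) m m)^2
        = (2*m+1)^2 * (16 * (Nat.centralBinom m)^2 * (m*(m+1))^(2*m)) := by
      rw [hNn]
      have : (2*m+1).choose m * m^m * (m+1)^(m+1) = ((2*m+1).choose m * (m+1)) * (m^m * (m+1)^m) := by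
        rw [pow_succ]; ring
      rw [this, hid]
      rw [show (m*(m+1))^(2*m) = (m^m*(m+1)^m)^2 from by
        rw [mul_pow, mul_pow, ← pow_mul, ← pow_mul, Nat.mul_comm m 2]]
      ring
    rw [e1]
    have e2 : (((2*m+1))^(2*m+1))^2 = (2*m+1)^2 * ((2*m+1)^2)^(2*m) := by
      rw [← pow_mul, ← pow_mul, ← pow_add]; congr 1; ring
    rw [e2]
    apply Nat.mul_le_mul_left
    have h16 : 16 ≤ 3*m+1 := by omega
    have hcb := cb_sq m
    have h4m : (4*(m*(m+1)))^(2*m) ≤ ((2*m+1)^2)^(2*m) := Nat.pow_le_pow_left (by nlinarith) _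
    have expand : (4*(m*(m+1)))^(2*m) = 16^m * (m*(m+1))^(2*m) := by
      rw [mul_pow, show (4:ℕ)^(2*m) = 16^m from by rw [pow_mul]; norm_num]
    calc 16 * (Nat.centralBinom m)^2 * (m*(m+1))^(2*m)
        ≤ (3*m+1) * (Nat.centralBinom m)^2 * (m*(m+1))^(2*m) := by
          apply Nat.mul_le_mul_right
          apply Nat.mul_le_mul_right
          exact h16
      _ = ((Nat.centralBinom m)^2 * (3*m+1)) * (m*(m+1))^(2*m) := by ring
      _ ≤ 16^m * (m*(m+1))^(2*m) := Nat.mul_le_mul_right _ hcb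
      _ = (4*(m*(m+1)))^(2*m) := expand.symm
      _ ≤ ((2*m+1)^2)^(2*m) := h4m
  exact (Nat.pow_le_pow_iff_left (by norm_num : (2:ℕ) ≠ 0)).mp hsq

private lemma exp_lb (x : ℝ) : 1 - x ≤ Real.exp (-x) := by
  have := Real.add_one_le_exp (-x); linarith

private lemma exp_ub (x : ℝ) (hx : x < 1) : Real.exp x ≤ 1/(1-x) := by
  have h1 : 0 < 1 - x := by linarith
  have h2 : Real.exp x * (1-x) ≤ Real.exp x * Real.exp (-x) :=
    mul_le_mul_of_nonneg_left (exp_lb x) (Real.exp_nonneg x)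
  rw [← Real.exp_add] at h2
  simp at h2
  rw [le_div_iff₀ h1]
  linarith

private lemma exp_pow_bound (n k : ℕ) (c : ℝ) (hn : 0 < n) (hc : 0 ≤ c) (hcn : c < n) (hk : k ≤ n) :
    (1 - c/(n:ℝ))^k ≤ Real.exp (-(c*k/n)) := by
  have hn0 : (0:ℝ) < n := by exact_mod_cast hn
  have h1 : (0:ℝ) ≤ 1 - c/n := by
    rw [sub_nonneg, div_le_one hn0]; linarith
  have h2 : (1 - c/(n:ℝ))^k ≤ Real.exp (-(c/n))^k :=
    pow_le_pow_left₀ h1 (exp_lb (c/n)) k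
  refine h2.trans_eq ?_
  rw [← Real.exp_nat_mul]
  congr 1
  ring

private lemma exp_inv_bound : Real.exp (-(1:ℝ)) ≤ 1/2.7182818283 := by
  rw [Real.exp_neg, inv_eq_one_div]
  apply one_div_le_one_div_of_le (by norm_num)
  exact le_of_lt Real.exp_one_gt_d9

private lemma head1 (n : ℕ) (hn : 27 ≤ n) :
    ∑ j ∈ range 2, (n.choose j : ℝ) * ((1:ℝ)/n)^j * (1-(1:ℝ)/n)^(n-j) ≤ 3/4 := by
  have hnR : (27:ℝ) ≤ (n:ℝ) := by exact_mod_cast hn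
  have hn0 : (0:ℝ) < n := by linarith
  have hinv : (1:ℝ)/n ≤ 1 := by rw [div_le_one hn0]; linarith
  have hy0 : (0:ℝ) ≤ 1 - 1/(n:ℝ) := by linarith
  have hsum : ∑ j ∈ range 2, (n.choose j : ℝ) * ((1:ℝ)/n)^j * (1-(1:ℝ)/n)^(n-j)
      = (1-(1:ℝ)/n)^(n-1) * (2 - 1/n) := by
    rw [Finset.sum_range_succ, Finset.sum_range_succ, Finset.sum_range_zero]
    simp only [Nat.choose_zero_right, Nat.choose_one_right, pow_zero, pow_one,
      Nat.cast_one, one_mul, Nat.sub_zero, zero_add]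
    have e1 : (1-(1:ℝ)/n)^n = (1-(1:ℝ)/n)^(n-1) * (1-1/n) := by
      rw [← pow_succ]; congr 1; omega
    have e2 : (n:ℝ) * ((1:ℝ)/n) = 1 := by field_simp
    calc (1-(1:ℝ)/n)^n + (n:ℝ) * ((1:ℝ)/n) * (1-(1:ℝ)/n)^(n-1)
        = (1-(1:ℝ)/n)^(n-1) * (1-1/n) + 1 * (1-(1:ℝ)/n)^(n-1) := by rw [e1, e2]
      _ = (1-(1:ℝ)/n)^(n-1) * (2 - 1/n) := by ring
  rw [hsum]
  have hp := exp_pow_bound n (n-1) 1 (by omega) (by norm_num) (by linarith) (by omega)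
  have hcast : ((n-1 : ℕ):ℝ) = (n:ℝ) - 1 := by
    have : 1 ≤ n := by omega
    push_cast [this]; ring
  rw [hcast] at hp
  have hsplit : Real.exp (-(1*((n:ℝ)-1)/n)) = Real.exp (-1) * Real.exp (1/n) := by
    rw [← Real.exp_add]; congr 1; field_simp; ring
  have hexp4 : Real.exp ((1:ℝ)/n) ≤ (n:ℝ)/((n:ℝ)-1) := by
    have h := exp_ub (1/(n:ℝ)) (by rw [div_lt_one hn0]; linarith)
    rw [show (1:ℝ) - 1/(n:ℝ) = ((n:ℝ)-1)/n from by field_simp, one_div_div] at h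
    exact h
  have hb1 : (0:ℝ) ≤ 2 - 1/n := by linarith
  have hchain : (1-(1:ℝ)/n)^(n-1) * (2-1/n)
      ≤ ((1/2.7182818283) * ((n:ℝ)/((n:ℝ)-1))) * (2-1/n) := by
    apply mul_le_mul_of_nonneg_right _ hb1
    calc (1-(1:ℝ)/n)^(n-1) ≤ Real.exp (-(1*((n:ℝ)-1)/n)) := hp
      _ = Real.exp (-1) * Real.exp (1/n) := hsplit
      _ ≤ (1/2.7182818283) * ((n:ℝ)/((n:ℝ)-1)) := by
          apply mul_le_mul exp_inv_bound hexp4 (Real.exp_nonneg _) (by norm_num)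
  refine hchain.trans ?_
  have hne : (0:ℝ) < (n:ℝ) - 1 := by linarith
  rw [show (1/2.7182818283) * ((n:ℝ)/((n:ℝ)-1)) * (2-1/n)
      = (2*(n:ℝ)-1)/(2.7182818283*((n:ℝ)-1)) from by field_simp]
  rw [div_le_iff₀ (by positivity)]
  norm_num
  linarith


private lemma head2 (n : ℕ) (hn : 23 ≤ n) :
    ∑ j ∈ range 3, (n.choose j : ℝ) * ((2:ℝ)/n)^j * (1-(2:ℝ)/n)^(n-j) ≤ 3/4 := by
  have hnR : (23:ℝ) ≤ (n:ℝ) := by exact_mod_cast hn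
  have hn0 : (0:ℝ) < n := by linarith
  have hy0 : (0:ℝ) ≤ 1 - 2/(n:ℝ) := by
    rw [sub_nonneg, div_le_one hn0]; linarith
  have hsum : ∑ j ∈ range 3, (n.choose j : ℝ) * ((2:ℝ)/n)^j * (1-(2:ℝ)/n)^(n-j)
      = (1-(2:ℝ)/n)^(n-2) * (5 - 10/n + 4/(n:ℝ)^2) := by
    rw [Finset.sum_range_succ, Finset.sum_range_succ, Finset.sum_range_succ,
      Finset.sum_range_zero]
    simp only [Nat.choose_zero_right, Nat.choose_one_right, Nat.cast_choose_two,
      pow_zero, pow_one, Nat.cast_one, one_mul, Nat.sub_zero, zero_add]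
    have e1 : (1-(2:ℝ)/n)^n = (1-(2:ℝ)/n)^(n-2) * (1-(2:ℝ)/n)^2 := by
      rw [← pow_add]; congr 1; omega
    have e2 : (1-(2:ℝ)/n)^(n-1) = (1-(2:ℝ)/n)^(n-2) * (1-(2:ℝ)/n) := by
      rw [← pow_succ]; congr 1; omega
    rw [e1, e2]
    field_simp
    ring
  rw [hsum]
  have hbr0 : (0:ℝ) ≤ 5 - 10/n + 4/(n:ℝ)^2 := by
    have h1 : 10/(n:ℝ) ≤ 10/23 := by
      apply div_le_div_of_nonneg_left (by norm_num) (by norm_num) hnR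
    have h2 : (0:ℝ) ≤ 4/(n:ℝ)^2 := by positivity
    linarith
  have hp := exp_pow_bound n (n-2) 2 (by omega) (by norm_num) (by linarith) (by omega)
  have hcast : ((n-2 : ℕ):ℝ) = (n:ℝ) - 2 := by
    have : 2 ≤ n := by omega
    push_cast [this]; ring
  rw [hcast] at hp
  have hsplit : Real.exp (-(2*((n:ℝ)-2)/n)) = Real.exp (-1) * Real.exp (-1) * Real.exp (4/n) := by
    rw [← Real.exp_add, ← Real.exp_add]; congr 1; field_simp; ring
  have hexp4 : Real.exp ((4:ℝ)/n) ≤ (n:ℝ)/((n:ℝ)-4) := by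
    have h := exp_ub (4/(n:ℝ)) (by rw [div_lt_one hn0]; linarith)
    rw [show (1:ℝ) - 4/(n:ℝ) = ((n:ℝ)-4)/n from by field_simp, one_div_div] at h
    exact h
  have hne : (0:ℝ) < (n:ℝ) - 4 := by linarith
  have hE : (0:ℝ) < 2.7182818283 := by norm_num
  have hchain : (1-(2:ℝ)/n)^(n-2) * (5 - 10/n + 4/(n:ℝ)^2)
      ≤ ((1/2.7182818283) * (1/2.7182818283) * ((n:ℝ)/((n:ℝ)-4))) * (5 - 10/n + 4/(n:ℝ)^2) := by
    apply mul_le_mul_of_nonneg_right _ hbr0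
    calc (1-(2:ℝ)/n)^(n-2) ≤ Real.exp (-(2*((n:ℝ)-2)/n)) := hp
      _ = Real.exp (-1) * Real.exp (-1) * Real.exp (4/n) := hsplit
      _ ≤ (1/2.7182818283) * (1/2.7182818283) * ((n:ℝ)/((n:ℝ)-4)) := by
          apply mul_le_mul _ hexp4 (Real.exp_nonneg _) (by positivity)
          apply mul_le_mul exp_inv_bound exp_inv_bound (Real.exp_nonneg _) (by norm_num)
  refine hchain.trans ?_
  rw [show ((1:ℝ)/2.7182818283) * (1/2.7182818283) * ((n:ℝ)/((n:ℝ)-4)) * (5 - 10/n + 4/(n:ℝ)^2)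
      = (5*(n:ℝ)^2 - 10*(n:ℝ) + 4)/(2.7182818283^2*(((n:ℝ)-4)*(n:ℝ))) from by
    field_simp]
  rw [div_le_iff₀ (by positivity)]
  nlinarith [sq_nonneg ((n:ℝ)-23), hnR]

private lemma head_cast (n m : ℕ) (hn : 1 ≤ n) (hm : m ≤ n) :
    ∑ j ∈ range (m+1), (n.choose j : ℝ)*((m:ℝ)/n)^j*(1-(m:ℝ)/n)^(n-j)
      = ((∑ j ∈ range (m+1), Nn n m j : ℕ) : ℝ)/(n:ℝ)^n := by
  rw [Nat.cast_sum, Finset.sum_div]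
  exact Finset.sum_congr rfl fun j hj => by
    simp only [mem_range] at hj
    exact Bcast n m j hn hm (by omega)

private lemma head_nat_imp (n m : ℕ) (hn : 1 ≤ n) (hm : m ≤ n)
    (h : 4 * ∑ j ∈ range (m+1), Nn n m j ≤ 3 * n^n) :
    ∑ j ∈ range (m+1), (n.choose j : ℝ)*((m:ℝ)/n)^j*(1-(m:ℝ)/n)^(n-j) ≤ 3/4 := by
  rw [head_cast n m hn hm]
  have hn0 : (0:ℝ) < (n:ℝ)^n := by
    have : (0:ℝ) < (n:ℝ) := by exact_mod_cast hn
    positivity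
  rw [div_le_div_iff₀ hn0 (by norm_num)]
  have hcast : ((4 * ∑ j ∈ range (m+1), Nn n m j : ℕ) : ℝ) ≤ ((3 * n^n : ℕ) : ℝ) :=
    Nat.cast_le.mpr h
  push_cast at hcast ⊢
  linarith

private lemma tail_of_headR (n m : ℕ) (hm : 1 ≤ m) (hnm : 2*m+1 ≤ n)
    (hhead : ∑ j ∈ range (m+1), (n.choose j : ℝ)*((m:ℝ)/n)^j*(1-(m:ℝ)/n)^(n-j) ≤ 3/4) :
    (1:ℝ)/4 ≤ ∑ j ∈ Ico (m+1) (n+1), (n.choose j : ℝ)*((m:ℝ)/n)^j*(1-(m:ℝ)/n)^(n-j) := by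
  have htot := binom_sum n ((m:ℝ)/n)
  have hsplit := Finset.sum_range_add_sum_Ico
    (fun j => (n.choose j : ℝ)*((m:ℝ)/n)^j*(1-(m:ℝ)/n)^(n-j)) (show m+1 ≤ n+1 from by omega)
  linarith

private lemma tail_of_mode (n m : ℕ) (hm : 1 ≤ m) (hnm : 2*m+1 ≤ n)
    (hmode : (Nn n m m : ℝ)/(n:ℝ)^n ≤ 1/4) :
    (1:ℝ)/4 ≤ ∑ j ∈ Ico (m+1) (n+1), (n.choose j : ℝ)*((m:ℝ)/n)^j*(1-(m:ℝ)/n)^(n-j) := by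
  have hhalf := half_le_tail n m hm hnm
  have hBm : (n.choose m : ℝ) * ((m:ℝ)/n)^m * (1-(m:ℝ)/n)^(n-m) = (Nn n m m : ℝ)/(n:ℝ)^n :=
    Bcast n m m (by omega) (by omega) (by omega)
  rw [hBm] at hhalf
  linarith

private lemma mode_quarter (n m n₀ : ℕ) (hm : 1 ≤ m) (hn₀ : 2*m+1 ≤ n₀) (hn : n₀ ≤ n)
    (hnum : 4 * Nn n₀ m m ≤ n₀^n₀) :
    (Nn n m m : ℝ)/(n:ℝ)^n ≤ 1/4 := by
  refine (mode_anti m n₀ n hm (by omega) hn).trans ?_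
  have hp : (0:ℝ) < (n₀:ℝ)^n₀ := by
    have : (0:ℝ) < (n₀:ℝ) := by exact_mod_cast (by omega : 0 < n₀)
    positivity
  rw [div_le_div_iff₀ hp (by norm_num)]
  have hcast : ((4 * Nn n₀ m m : ℕ) : ℝ) ≤ ((n₀^n₀ : ℕ) : ℝ) := Nat.cast_le.mpr hnum
  push_cast at hcast
  linarith

private lemma tail_quarter (n m : ℕ) (hm : 1 ≤ m) (hnm : 2*m+1 ≤ n) :
    (1:ℝ)/4 ≤ ∑ j ∈ Ico (m+1) (n+1), (n.choose j : ℝ)*((m:ℝ)/n)^j*(1-(m:ℝ)/n)^(n-j) := by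
  rcases m with _|_|_|_|_|m
  · omega
  · -- m = 1
    by_cases hbig : 27 ≤ n
    · apply tail_of_headR n 1 le_rfl hnm
      have h := head1 n hbig
      norm_num at h ⊢
      convert h using 2
    · apply tail_of_headR n 1 le_rfl hnm
      apply head_nat_imp n 1 (by omega) (by omega)
      have h1 : 3 ≤ n := by omega
      have h2 : n ≤ 26 := by omega
      interval_cases n <;> norm_num [Nn, Finset.sum_range_succ, Nat.choose]
  · -- m = 2
    by_cases hbig : 23 ≤ n
    · apply tail_of_headR n 2 (by omega) hnm
      have h := head2 n hbig
      norm_num at h ⊢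
      convert h using 2
    · apply tail_of_headR n 2 (by omega) hnm
      apply head_nat_imp n 2 (by omega) (by omega)
      have h1 : 5 ≤ n := by omega
      have h2 : n ≤ 22 := by omega
      interval_cases n <;> norm_num [Nn, Finset.sum_range_succ, Nat.choose]
  · -- m = 3
    by_cases hbig : 16 ≤ n
    · apply tail_of_mode n 3 (by omega) hnm
      apply mode_quarter n 3 16 (by omega) (by omega) hbig
      norm_num [Nn, Nat.choose]
    · apply tail_of_headR n 3 (by omega) hnm
      apply head_nat_imp n 3 (by omega) (by omega)
      have h1 : 7 ≤ n := by omega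
      have h2 : n ≤ 15 := by omega
      interval_cases n <;> norm_num [Nn, Finset.sum_range_succ, Nat.choose]
  · -- m = 4
    by_cases hbig : 12 ≤ n
    · apply tail_of_mode n 4 (by omega) hnm
      apply mode_quarter n 4 12 (by omega) (by omega) hbig
      norm_num [Nn, Nat.choose]
    · apply tail_of_headR n 4 (by omega) hnm
      apply head_nat_imp n 4 (by omega) (by omega)
      have h1 : 9 ≤ n := by omega
      have h2 : n ≤ 11 := by omega
      interval_cases n <;> norm_num [Nn, Finset.sum_range_succ, Nat.choose]
  · -- m ≥ 5
    apply tail_of_mode n (m+5) (by omega) hnm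
    apply mode_quarter n (m+5) (2*(m+5)+1) (by omega) le_rfl hnm
    exact mode_small_nat (m+5) (by omega)

/-- If N ~ Binomial(n,q) with n ≥ 1 and 0 < q ≤ 1/2, then P(N ≥ nq) ≥ min(q, 1/4). -/
theorem binomial_exceeds_mean (n : ℕ) (hn : 1 ≤ n) (q : ℝ) (hq0 : 0 < q) (hq1 : q ≤ 1 / 2) :
    min q (1 / 4) ≤
      ∑ j ∈ Finset.range (n + 1),
        (if (n : ℝ) * q ≤ (j : ℝ) then (n.choose j : ℝ) * q ^ j * (1 - q) ^ (n - j) else 0) := by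
  have hq1' : q ≤ 1 := by linarith
  have h1q : (0:ℝ) ≤ 1 - q := by linarith
  have hnR : (1:ℝ) ≤ (n:ℝ) := by exact_mod_cast hn
  set k := ⌈(n:ℝ)*q⌉₊ with hkdef
  have hk1 : 1 ≤ k := by
    rw [hkdef]
    exact Nat.ceil_pos.mpr (by positivity)
  have hkn : k ≤ n := by
    rw [hkdef]
    apply Nat.ceil_le.mpr
    calc (n:ℝ)*q ≤ (n:ℝ)*1 := by nlinarith
      _ = (n:ℝ) := by ring
  have hite : (∑ j ∈ Finset.range (n + 1),
        (if (n : ℝ) * q ≤ (j : ℝ) then (n.choose j : ℝ) * q ^ j * (1 - q) ^ (n - j) else 0))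
      = ∑ j ∈ Ico k (n+1), (n.choose j : ℝ) * q ^ j * (1 - q) ^ (n - j) := by
    have hset : Finset.filter (fun j : ℕ => (n:ℝ)*q ≤ (j:ℝ)) (Finset.range (n+1)) = Ico k (n+1) := by
      ext j
      simp only [Finset.mem_filter, Finset.mem_range, Finset.mem_Ico]
      constructor
      · rintro ⟨h1, h2⟩; exact ⟨Nat.ceil_le.mpr h2, h1⟩
      · rintro ⟨h1, h2⟩; exact ⟨h2, Nat.ceil_le.mp h1⟩
    rw [← hset, Finset.sum_filter]
  rw [hite]
  by_cases hk2 : k = 1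
  · -- tail from 1 : at least q
    have htot := binom_sum n q
    have hsplit := Finset.sum_range_add_sum_Ico
      (fun j => (n.choose j : ℝ) * q ^ j * (1 - q) ^ (n - j)) (show 1 ≤ n+1 from by omega)
    have hone : ∑ j ∈ Finset.range 1, (n.choose j : ℝ) * q ^ j * (1 - q) ^ (n - j)
        = (1-q)^n := by
      simp
    have hpow : (1-q)^n ≤ 1-q := pow_le_of_le_one h1q (by linarith) (by omega)
    have hq_le : q ≤ ∑ j ∈ Ico 1 (n+1), (n.choose j : ℝ) * q ^ j * (1 - q) ^ (n - j) := by
      rw [hone] at hsplit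
      linarith
    rw [hk2]
    exact le_trans (min_le_left _ _) hq_le
  · -- k ≥ 2 : at least 1/4
    have hk2' : 2 ≤ k := by omega
    have hlt : ((k-1:ℕ):ℝ) < (n:ℝ)*q := by
      apply Nat.lt_ceil.mp
      omega
    have h2m : 2*(k-1)+1 ≤ n := by
      have hcast : (2*(k-1):ℕ) < n := by
        have h1 : ((2*(k-1):ℕ):ℝ) < (n:ℝ) := by
          push_cast
          nlinarith
        exact_mod_cast h1
      omega
    have hm1 : 1 ≤ k - 1 := by omega
    have hp0 : (0:ℝ) ≤ ((k-1:ℕ):ℝ)/n := by positivity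
    have hp1 : ((k-1:ℕ):ℝ)/n ≤ 1 := by
      rw [div_le_one (by linarith)]
      have : ((k-1:ℕ):ℝ) ≤ (n:ℝ) := by exact_mod_cast (by omega : k-1 ≤ n)
      linarith
    have hpq : ((k-1:ℕ):ℝ)/n ≤ q := by
      rw [div_le_iff₀ (by linarith)]
      nlinarith
    have hmono := tail_mono n k hk1 (by omega)
      (Set.mem_Icc.mpr ⟨hp0, hp1⟩)
      (Set.mem_Icc.mpr ⟨le_of_lt hq0, hq1'⟩) hpq
    simp only [] at hmono
    have hquarter := tail_quarter n (k-1) hm1 h2m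
    rw [show k-1+1 = k from by omega] at hquarter
    calc min q (1/4) ≤ 1/4 := min_le_right _ _
      _ ≤ ∑ j ∈ Ico k (n+1), (n.choose j : ℝ) * (((k-1:ℕ):ℝ)/n) ^ j * (1 - ((k-1:ℕ):ℝ)/n) ^ (n - j) := hquarter
      _ ≤ ∑ j ∈ Ico k (n+1), (n.choose j : ℝ) * q ^ j * (1 - q) ^ (n - j) := hmono
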